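/- With \check{R}_1(x) = \check{R}(x) ⊗ I acting on ℂ^2 ⊗ ℂ^2 and K_1(x) = K(x) ⊗ I with K(x) the boundary matrix, the reflection equation holds: \check{R}_1(x_2/x_1) K_1(x_2) \check{R}_1(x_1 x_2) K_1(x_1) = K_1(x_1) \check{R}_1(x_1 x_2) K_1(x_2) \check{R}_1(x_2/x_1), for generic x_1, x_2. -/

import Mathlib

open Matrix Kronecker

set_option maxHeartbeats 2000000

/-- The matrix `w` on ℂ² ⊗ ℂ² (product basis); `st = t^{1/2}`. -/
noncomputable def wMatP (st : ℂ) : Matrix (Fin 2 × Fin 2) (Fin 2 × Fin 2) ℂ :=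
  Matrix.single (0, 1) (0, 1) (-st⁻¹) + Matrix.single (0, 1) (1, 0) st
    + Matrix.single (1, 0) (0, 1) st⁻¹ + Matrix.single (1, 0) (1, 0) (-st)

/-- `r(x) = (x - 1)/(t^{-1/2} x - t^{1/2})`. -/
noncomputable def rFun (st x : ℂ) : ℂ := (x - 1) / (st⁻¹ * x - st)

/-- `Ř₁(x) = 1 + r(x) w` acting on ℂ² ⊗ ℂ². -/
noncomputable def RcheckP (st x : ℂ) : Matrix (Fin 2 × Fin 2) (Fin 2 × Fin 2) ℂ :=
  1 + rFun st x • wMatP st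

/-- The left boundary matrix `B`; `st0 = t_0^{1/2}`. -/
noncomputable def Bmat (st0 ξ : ℂ) : Matrix (Fin 2) (Fin 2) ℂ :=
  !![-st0, ξ⁻¹ * st0⁻¹;
     ξ * st0, -st0⁻¹]

/-- `k(x)`; `su0 = u_0^{1/2}`. -/
noncomputable def kFun (st0 su0 x : ℂ) : ℂ :=
  (x ^ 2 - 1) / (st0⁻¹ * x ^ 2 - (su0 - su0⁻¹) * x - st0)

/-- `K(x) = 1 + k(x) B`. -/
noncomputable def Kmat (st0 su0 ξ x : ℂ) : Matrix (Fin 2) (Fin 2) ℂ :=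
  1 + kFun st0 su0 x • Bmat st0 ξ

/-- `K₁(x) = K(x) ⊗ I` acting on ℂ² ⊗ ℂ². -/
noncomputable def K1 (st0 su0 ξ x : ℂ) : Matrix (Fin 2 × Fin 2) (Fin 2 × Fin 2) ℂ :=
  Kmat st0 su0 ξ x ⊗ₖ (1 : Matrix (Fin 2) (Fin 2) ℂ)

noncomputable def Wp (st : ℂ) : Matrix (Fin 2 × Fin 2) (Fin 2 × Fin 2) ℂ :=
  Matrix.single (0, 1) (0, 1) (-1) + Matrix.single (0, 1) (1, 0) (st ^ 2)
    + Matrix.single (1, 0) (0, 1) 1 + Matrix.single (1, 0) (1, 0) (-(st ^ 2))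
noncomputable def Bp (st0 ξ : ℂ) : Matrix (Fin 2) (Fin 2) ℂ :=
  !![-(st0 ^ 2) * ξ, 1; st0 ^ 2 * ξ ^ 2, -ξ]
noncomputable def Np (st0 su0 ξ x : ℂ) : Matrix (Fin 2) (Fin 2) ℂ :=
  (su0 * ξ * x ^ 2 - st0 * ξ * (su0 ^ 2 - 1) * x - su0 * ξ * st0 ^ 2) • (1 : Matrix (Fin 2) (Fin 2) ℂ)
    + (su0 * (x ^ 2 - 1)) • Bp st0 ξ
noncomputable def Qp (st0 su0 ξ x : ℂ) : Matrix (Fin 2 × Fin 2) (Fin 2 × Fin 2) ℂ :=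
  Np st0 su0 ξ x ⊗ₖ (1 : Matrix (Fin 2) (Fin 2) ℂ)
noncomputable def Pp (st a b : ℂ) : Matrix (Fin 2 × Fin 2) (Fin 2 × Fin 2) ℂ :=
  (a - st ^ 2 * b) • (1 : Matrix (Fin 2 × Fin 2) (Fin 2 × Fin 2) ℂ) + (a - b) • Wp st

theorem Rrep1 (st x1 x2 : ℂ) (ht : st ≠ 0) (h1 : x1 ≠ 0)
    (hr : st⁻¹ * (x2 / x1) - st ≠ 0) :
    RcheckP st (x2 / x1) = (x2 - st ^ 2 * x1)⁻¹ • Pp st x2 x1 := by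
  have hz : x2 - st ^ 2 * x1 ≠ 0 := by
    have : x2 - st ^ 2 * x1 = st * x1 * (st⁻¹ * (x2 / x1) - st) := by
      field_simp
    rw [this]; exact mul_ne_zero (mul_ne_zero ht h1) hr
  have hrw : rFun st (x2 / x1) = (st * (x2 - x1)) / (x2 - st ^ 2 * x1) := by
    unfold rFun; rw [div_eq_div_iff hr hz]; field_simp
  rw [eq_inv_smul_iff₀ hz]
  ext ⟨i, j⟩ ⟨k, l⟩
  fin_cases i <;> fin_cases j <;> fin_cases k <;> fin_cases l <;>
  · simp only [RcheckP, hrw, wMatP, Pp, Wp, Matrix.one_apply,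
      Matrix.single, Matrix.add_apply, Matrix.smul_apply,
      smul_eq_mul, Prod.mk.injEq]
    norm_num
    try field_simp
    try ring

theorem Rrep2 (st x : ℂ) (ht : st ≠ 0) (hr : st⁻¹ * x - st ≠ 0) :
    RcheckP st x = (x - st ^ 2)⁻¹ • Pp st x 1 := by
  have hz : x - st ^ 2 ≠ 0 := by
    have : x - st ^ 2 = st * (st⁻¹ * x - st) := by field_simp
    rw [this]; exact mul_ne_zero ht hr
  have hrw : rFun st x = (st * (x - 1)) / (x - st ^ 2) := by
    unfold rFun; rw [div_eq_div_iff hr hz]; field_simp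
  rw [eq_inv_smul_iff₀ hz]
  ext ⟨i, j⟩ ⟨k, l⟩
  fin_cases i <;> fin_cases j <;> fin_cases k <;> fin_cases l <;>
  · simp only [RcheckP, hrw, wMatP, Pp, Wp, Matrix.one_apply,
      Matrix.single, Matrix.add_apply, Matrix.smul_apply,
      smul_eq_mul, Prod.mk.injEq]
    norm_num
    try field_simp
    try ring

theorem Krep (st0 su0 ξ x : ℂ) (ht0 : st0 ≠ 0) (hu0 : su0 ≠ 0) (hξ : ξ ≠ 0)
    (hk : st0⁻¹ * x ^ 2 - (su0 - su0⁻¹) * x - st0 ≠ 0) :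
    K1 st0 su0 ξ x
      = (su0 * ξ * x ^ 2 - st0 * ξ * (su0 ^ 2 - 1) * x - su0 * ξ * st0 ^ 2)⁻¹ • Qp st0 su0 ξ x := by
  have hz : su0 * ξ * x ^ 2 - st0 * ξ * (su0 ^ 2 - 1) * x - su0 * ξ * st0 ^ 2 ≠ 0 := by
    have : su0 * ξ * x ^ 2 - st0 * ξ * (su0 ^ 2 - 1) * x - su0 * ξ * st0 ^ 2
        = su0 * ξ * st0 * (st0⁻¹ * x ^ 2 - (su0 - su0⁻¹) * x - st0) := by
      field_simp
    rw [this]; exact mul_ne_zero (mul_ne_zero (mul_ne_zero hu0 hξ) ht0) hk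
  have hkw : kFun st0 su0 x = (su0 * ξ * st0 * (x ^ 2 - 1))
      / (su0 * ξ * x ^ 2 - st0 * ξ * (su0 ^ 2 - 1) * x - su0 * ξ * st0 ^ 2) := by
    unfold kFun; rw [div_eq_div_iff hk hz]; field_simp
  rw [eq_inv_smul_iff₀ hz]
  have hz' : x * (su0 * x - st0 * (su0 ^ 2 - 1)) - su0 * st0 ^ 2 ≠ 0 := by
    intro h; apply hz; linear_combination ξ * h
  ext ⟨i, j⟩ ⟨k, l⟩
  fin_cases i <;> fin_cases j <;> fin_cases k <;> fin_cases l <;>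
  · simp only [K1, Kmat, hkw, Bmat, Qp, Np, Bp, Matrix.kroneckerMap_apply,
      Matrix.one_apply, Matrix.add_apply, Matrix.smul_apply, Matrix.of_apply,
      Matrix.cons_val', Matrix.cons_val_zero, Matrix.cons_val_one, Matrix.head_cons,
      Matrix.empty_val', Matrix.cons_val_fin_one, smul_eq_mul, Prod.mk.injEq]
    norm_num
    try field_simp
    try ring

theorem key (st st0 su0 ξ x1 x2 : ℂ) :
    Pp st x2 x1 * Qp st0 su0 ξ x2 * Pp st (x1 * x2) 1 * Qp st0 su0 ξ x1
      = Qp st0 su0 ξ x1 * Pp st (x1 * x2) 1 * Qp st0 su0 ξ x2 * Pp st x2 x1 := by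
  ext ⟨i, j⟩ ⟨k, l⟩
  fin_cases i <;> fin_cases j <;> fin_cases k <;> fin_cases l <;>
  · simp only [Pp, Qp, Np, Bp, Wp, Matrix.mul_apply, Fintype.sum_prod_type,
      Matrix.kroneckerMap_apply, Matrix.one_apply, Fin.sum_univ_two,
      Matrix.single, Matrix.add_apply, Matrix.smul_apply, Matrix.of_apply,
      Matrix.cons_val', Matrix.cons_val_zero, Matrix.cons_val_one, Matrix.head_cons,
      Matrix.empty_val', Matrix.cons_val_fin_one, smul_eq_mul, Prod.mk.injEq]
    norm_num
    ring

/-- The reflection equation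
`Ř₁(x₂/x₁) K₁(x₂) Ř₁(x₁x₂) K₁(x₁) = K₁(x₁) Ř₁(x₁x₂) K₁(x₂) Ř₁(x₂/x₁)`
for generic `x₁, x₂` (all denominators nonzero). -/
theorem stmt3 (st st0 su0 ξ x1 x2 : ℂ) (ht : st ≠ 0) (ht0 : st0 ≠ 0) (hu0 : su0 ≠ 0)
    (hξ : ξ ≠ 0) (h1 : x1 ≠ 0) (h2 : x2 ≠ 0)
    (hr1 : st⁻¹ * (x2 / x1) - st ≠ 0)
    (hr2 : st⁻¹ * (x1 * x2) - st ≠ 0)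
    (hk1 : st0⁻¹ * x1 ^ 2 - (su0 - su0⁻¹) * x1 - st0 ≠ 0)
    (hk2 : st0⁻¹ * x2 ^ 2 - (su0 - su0⁻¹) * x2 - st0 ≠ 0) :
    RcheckP st (x2 / x1) * K1 st0 su0 ξ x2 * RcheckP st (x1 * x2) * K1 st0 su0 ξ x1
      = K1 st0 su0 ξ x1 * RcheckP st (x1 * x2) * K1 st0 su0 ξ x2 * RcheckP st (x2 / x1) := by
  rw [Rrep1 st x1 x2 ht h1 hr1, Rrep2 st (x1 * x2) ht hr2,
    Krep st0 su0 ξ x1 ht0 hu0 hξ hk1, Krep st0 su0 ξ x2 ht0 hu0 hξ hk2]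
  simp only [Matrix.smul_mul, Matrix.mul_smul, smul_smul]
  rw [key st st0 su0 ξ x1 x2]
  congr 1
  ring
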